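/- Let ι and κ be finite types, A1 an ι×ι real matrix, A2 an ι×κ real matrix, t a real number, and let A be the (ι⊕κ)×(ι⊕κ) real block matrix A = fromBlocks A1 A2 0 0. Then the matrix series S(t) = Σ_{k=1}^∞ (t^k / k!) · A1^(k-1) * A2 converges, and the matrix exponential of tA is the block matrix exp(tA) = fromBlocks (exp(t·A1)) (S(t)) 0 Id, where Id is the κ×κ identity matrix. -/

import Mathlib

open Matrix

/-- Block exponential computation used in the proof of Lemma 2.2: for the block matrix
`A = fromBlocks A1 A2 0 0`, the series `S(t) = ∑_{k=1}^∞ (t^k/k!) • A1^(k-1) * A2`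
converges and `exp (t • A) = fromBlocks (exp (t • A1)) (S t) 0 1`. -/
theorem stmt_1 {ι κ : Type*} [Fintype ι] [Fintype κ] [DecidableEq ι] [DecidableEq κ]
    (A1 : Matrix ι ι ℝ) (A2 : Matrix ι κ ℝ) (t : ℝ) :
    Summable (fun k : ℕ =>
      ((t ^ (k + 1) / (Nat.factorial (k + 1) : ℝ)) • (A1 ^ k * A2) : Matrix ι κ ℝ)) ∧
    NormedSpace.exp (t • Matrix.fromBlocks A1 A2 (0 : Matrix κ ι ℝ) (0 : Matrix κ κ ℝ)) =
      Matrix.fromBlocks (NormedSpace.exp (t • A1))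
        (∑' k : ℕ, ((t ^ (k + 1) / (Nat.factorial (k + 1) : ℝ)) • (A1 ^ k * A2) : Matrix ι κ ℝ))
        (0 : Matrix κ ι ℝ) (1 : Matrix κ κ ℝ) := by
  letI : NormedRing (Matrix (ι ⊕ κ) (ι ⊕ κ) ℝ) := Matrix.linftyOpNormedRing
  letI : NormedAlgebra ℝ (Matrix (ι ⊕ κ) (ι ⊕ κ) ℝ) := Matrix.linftyOpNormedAlgebra
  letI : NormedRing (Matrix ι ι ℝ) := Matrix.linftyOpNormedRing
  letI : NormedAlgebra ℝ (Matrix ι ι ℝ) := Matrix.linftyOpNormedAlgebra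
  set B : Matrix (ι ⊕ κ) (ι ⊕ κ) ℝ :=
    t • Matrix.fromBlocks A1 A2 (0 : Matrix κ ι ℝ) (0 : Matrix κ κ ℝ) with hBdef
  have hB : B = Matrix.fromBlocks (t • A1) (t • A2) 0 0 := by
    rw [hBdef, Matrix.fromBlocks_smul, smul_zero, smul_zero]
  have hone : (1 : Matrix (ι ⊕ κ) (ι ⊕ κ) ℝ) =
      Matrix.fromBlocks 1 0 0 1 := (Matrix.fromBlocks_one).symm
  have hsmulblocks : ∀ (r : ℝ) (W : Matrix ι ι ℝ) (X : Matrix ι κ ℝ) (Y : Matrix κ ι ℝ)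
      (Z : Matrix κ κ ℝ), r • Matrix.fromBlocks W X Y Z =
        Matrix.fromBlocks (r • W) (r • X) (r • Y) (r • Z) := fun r W X Y Z =>
    Matrix.fromBlocks_smul r W X Y Z
  have hpow : ∀ n : ℕ, B ^ (n + 1) =
      Matrix.fromBlocks ((t • A1) ^ (n + 1)) ((t ^ (n + 1)) • (A1 ^ n * A2)) 0 0 := by
    intro n
    induction n with
    | zero => simp [hB]
    | succ n ih =>
        rw [pow_succ, ih, hB, Matrix.fromBlocks_multiply]
        simp only [Matrix.mul_zero, Matrix.zero_mul, add_zero, zero_add]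
        refine Matrix.fromBlocks_inj.mpr ⟨?_, ?_, rfl, rfl⟩
        · rw [← pow_succ]
        · rw [smul_pow, Matrix.smul_mul, Matrix.mul_smul, smul_smul, ← pow_succ]
  have hg : HasSum (fun n : ℕ => ((n.factorial : ℝ)⁻¹) • B ^ n) (NormedSpace.exp B) :=
    NormedSpace.exp_series_hasSum_exp' B
  -- bundled block-extraction homs
  let F11 : Matrix (ι ⊕ κ) (ι ⊕ κ) ℝ →+ Matrix ι ι ℝ :=
    AddMonoidHom.mk' Matrix.toBlocks₁₁ fun _ _ => rfl
  let F12 : Matrix (ι ⊕ κ) (ι ⊕ κ) ℝ →+ Matrix ι κ ℝ :=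
    AddMonoidHom.mk' Matrix.toBlocks₁₂ fun _ _ => rfl
  let F21 : Matrix (ι ⊕ κ) (ι ⊕ κ) ℝ →+ Matrix κ ι ℝ :=
    AddMonoidHom.mk' Matrix.toBlocks₂₁ fun _ _ => rfl
  let F22 : Matrix (ι ⊕ κ) (ι ⊕ κ) ℝ →+ Matrix κ κ ℝ :=
    AddMonoidHom.mk' Matrix.toBlocks₂₂ fun _ _ => rfl
  have c11 : Continuous F11 := continuous_id.matrix_submatrix Sum.inl Sum.inl
  have c12 : Continuous F12 := continuous_id.matrix_submatrix Sum.inl Sum.inr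
  have c21 : Continuous F21 := continuous_id.matrix_submatrix Sum.inr Sum.inl
  have c22 : Continuous F22 := continuous_id.matrix_submatrix Sum.inr Sum.inr
  -- 1,1 block
  have h11 : HasSum (fun n : ℕ => F11 (((n.factorial : ℝ)⁻¹) • B ^ n))
      (F11 (NormedSpace.exp B)) := hg.map F11 c11
  have e11 : (fun n : ℕ => F11 (((n.factorial : ℝ)⁻¹) • B ^ n)) =
      fun n : ℕ => ((n.factorial : ℝ)⁻¹) • (t • A1) ^ n := by
    funext n
    show Matrix.toBlocks₁₁ (((n.factorial : ℝ)⁻¹) • B ^ n) = _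
    cases n with
    | zero => rw [pow_zero, pow_zero, hone, hsmulblocks, Matrix.toBlocks_fromBlocks₁₁]
    | succ n => rw [hpow n, hsmulblocks, Matrix.toBlocks_fromBlocks₁₁]
  rw [e11] at h11
  have hexp11 : Matrix.toBlocks₁₁ (NormedSpace.exp B) = NormedSpace.exp (t • A1) :=
    h11.unique (NormedSpace.exp_series_hasSum_exp' (t • A1))
  -- 1,2 block
  have h12 : HasSum (fun n : ℕ => F12 (((n.factorial : ℝ)⁻¹) • B ^ n))
      (F12 (NormedSpace.exp B)) := hg.map F12 c12
  have hf0 : F12 (((Nat.factorial 0 : ℕ) : ℝ)⁻¹ • B ^ 0) = 0 := by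
    show Matrix.toBlocks₁₂ (((Nat.factorial 0 : ℕ) : ℝ)⁻¹ • B ^ 0) = 0
    rw [pow_zero, hone, hsmulblocks, Matrix.toBlocks_fromBlocks₁₂, smul_zero]
  have h12'0 : HasSum (fun m : ℕ => F12 (((m.factorial : ℝ)⁻¹) • B ^ m))
      (F12 (NormedSpace.exp B) +
        ∑ i ∈ Finset.range 1, F12 (((i.factorial : ℝ)⁻¹) • B ^ i)) := by
    rw [Finset.range_one, Finset.sum_singleton, hf0, add_zero]
    exact h12
  have h12' := (hasSum_nat_add_iff 1).mpr h12'0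
  have e12 : (fun n : ℕ => F12 ((((n + 1).factorial : ℝ)⁻¹) • B ^ (n + 1))) =
      fun k : ℕ => ((t ^ (k + 1) / (Nat.factorial (k + 1) : ℝ)) • (A1 ^ k * A2)) := by
    funext k
    show Matrix.toBlocks₁₂ ((((k + 1).factorial : ℝ)⁻¹) • B ^ (k + 1)) = _
    rw [hpow k, hsmulblocks, Matrix.toBlocks_fromBlocks₁₂, smul_smul, div_eq_mul_inv,
      mul_comm]
  rw [e12] at h12'
  -- 2,1 block
  have h21 : HasSum (fun n : ℕ => F21 (((n.factorial : ℝ)⁻¹) • B ^ n))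
      (F21 (NormedSpace.exp B)) := hg.map F21 c21
  have e21 : (fun n : ℕ => F21 (((n.factorial : ℝ)⁻¹) • B ^ n)) =
      fun _ : ℕ => (0 : Matrix κ ι ℝ) := by
    funext n
    show Matrix.toBlocks₂₁ (((n.factorial : ℝ)⁻¹) • B ^ n) = 0
    cases n with
    | zero => rw [pow_zero, hone, hsmulblocks, Matrix.toBlocks_fromBlocks₂₁, smul_zero]
    | succ n => rw [hpow n, hsmulblocks, Matrix.toBlocks_fromBlocks₂₁, smul_zero]
  rw [e21] at h21
  have hexp21 : Matrix.toBlocks₂₁ (NormedSpace.exp B) = 0 := h21.unique hasSum_zero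
  -- 2,2 block
  have h22 : HasSum (fun n : ℕ => F22 (((n.factorial : ℝ)⁻¹) • B ^ n))
      (F22 (NormedSpace.exp B)) := hg.map F22 c22
  have e22 : (fun n : ℕ => F22 (((n.factorial : ℝ)⁻¹) • B ^ n)) =
      fun n : ℕ => if n = 0 then (1 : Matrix κ κ ℝ) else 0 := by
    funext n
    show Matrix.toBlocks₂₂ (((n.factorial : ℝ)⁻¹) • B ^ n) = _
    cases n with
    | zero =>
        rw [pow_zero, hone, hsmulblocks, Matrix.toBlocks_fromBlocks₂₂]
        simp
    | succ n =>
        rw [hpow n, hsmulblocks, Matrix.toBlocks_fromBlocks₂₂, smul_zero]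
        simp
  rw [e22] at h22
  have hexp22 : Matrix.toBlocks₂₂ (NormedSpace.exp B) = 1 :=
    h22.unique (by simpa using hasSum_ite_eq (0 : ℕ) (1 : Matrix κ κ ℝ))
  refine ⟨h12'.summable, ?_⟩
  conv_lhs => rw [← Matrix.fromBlocks_toBlocks (NormedSpace.exp B)]
  rw [hexp11, hexp21, hexp22, h12'.tsum_eq]
  rfl
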